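/- For every maximal location ⟨i,j⟩ of s, the string O_s^{⟨i,j⟩} is a proper prefix of lfo_s(Support(⟨i,j⟩)). -/

import Mathlib

/-- The fingerprint `C_s(i,j)`: the set of distinct letters occurring in `s_i … s_j`. -/
def fingerprint {α : Type*} [DecidableEq α] (s : ℕ → α) (i j : ℕ) : Finset α :=
  (Finset.Icc i j).image s

/-- `⟨i,j⟩` is a maximal location of the sequence `s_1 … s_n`. -/
def IsMaxLoc {α : Type*} [DecidableEq α] (s : ℕ → α) (n i j : ℕ) : Prop :=
  1 ≤ i ∧ i ≤ j ∧ j ≤ n ∧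
    (1 < i → s (i - 1) ∉ fingerprint s i j) ∧
    (j < n → s (j + 1) ∉ fingerprint s i j)

/-- `fo_s(i,j)`: the string of the first occurrences of each distinct letter
encountered when reading `s_i … s_j` from left to right. -/
def fo {α : Type*} [DecidableEq α] (s : ℕ → α) (i j : ℕ) : List α :=
  ((List.range' i (j + 1 - i)).filter
    (fun p => decide (∀ q ∈ Finset.Ico i p, s q ≠ s p))).map s

/-- `Support([i,j])`: the minimum over letters `a ∈ C_s(i,j)` of the position of
the rightmost occurrence of `a` in `s_i … s_j`. -/
noncomputable def support {α : Type*} [DecidableEq α] (s : ℕ → α) (i j : ℕ) : ℕ :=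
  sInf {q | ∃ a ∈ fingerprint s i j, q = sSup {p | i ≤ p ∧ p ≤ j ∧ s p = a}}

/-- `O_s^{[i,j]} = fo_s(Support([i,j]), j)`. -/
noncomputable def Ostr {α : Type*} [DecidableEq α] (s : ℕ → α) (i j : ℕ) : List α :=
  fo s (support s i j) j

/-- The substring `s_i … s_j` as a list. -/
def substr {α : Type*} (s : ℕ → α) (i j : ℕ) : List α :=
  (List.range' i (j + 1 - i)).map s

/-- The position of the next occurrence of `s_i` after position `i`, within the
extended sequence `s_1 … s_{n+1}`, and `n + 2` if there is none. -/
noncomputable def nxt {α : Type*} (s : ℕ → α) (n i : ℕ) : ℕ :=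
  sInf ({j | i < j ∧ j ≤ n + 1 ∧ s j = s i} ∪ {n + 2})

/-- `lfo_s(i) = fo_s(i, j − 1)` where `j` is the minimal position with `i < j` and
`s_j = s_i` if it exists and `j = n + 2` otherwise, computed in the sequence
extended by the sentinel `s_{n+1} = #`. -/
noncomputable def lfo {α : Type*} [DecidableEq α] (s : ℕ → α) (n i : ℕ) : List α :=
  fo s i (nxt s n i - 1)


lemma support_spec {α : Type*} [DecidableEq α] (s : ℕ → α) {i j : ℕ} (hij : i ≤ j) :
    i ≤ support s i j ∧ support s i j ≤ j ∧
      ∀ p, support s i j < p → p ≤ j → s p ≠ s (support s i j) := by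
  have hTne : {q | ∃ a ∈ fingerprint s i j, q = sSup {p | i ≤ p ∧ p ≤ j ∧ s p = a}}.Nonempty := by
    refine ⟨sSup {p | i ≤ p ∧ p ≤ j ∧ s p = s i}, s i, ?_, rfl⟩
    exact Finset.mem_image.2 ⟨i, Finset.mem_Icc.2 ⟨le_refl i, hij⟩, rfl⟩
  have hk : support s i j ∈
      {q | ∃ a ∈ fingerprint s i j, q = sSup {p | i ≤ p ∧ p ≤ j ∧ s p = a}} :=
    Nat.sInf_mem hTne
  obtain ⟨a, ha, hEq⟩ := hk
  obtain ⟨p0, hp0, hp0a⟩ := Finset.mem_image.1 ha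
  rw [Finset.mem_Icc] at hp0
  have hbdd : BddAbove {p | i ≤ p ∧ p ≤ j ∧ s p = a} := ⟨j, fun p hp => hp.2.1⟩
  have hne : Set.Nonempty {p | i ≤ p ∧ p ≤ j ∧ s p = a} := ⟨p0, hp0.1, hp0.2, hp0a⟩
  have hmem := Nat.sSup_mem hne hbdd
  rw [← hEq] at hmem
  refine ⟨hmem.1, hmem.2.1, fun p hkp hpj hsp => ?_⟩
  have hpmem : p ∈ {p | i ≤ p ∧ p ≤ j ∧ s p = a} :=
    ⟨le_trans hmem.1 (le_of_lt hkp), hpj, by rw [hsp, hmem.2.2]⟩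
  have := le_csSup hbdd hpmem
  rw [← hEq] at this
  omega

lemma fo_append {α : Type*} [DecidableEq α] (s : ℕ → α) {i j1 j2 : ℕ}
    (h1 : i ≤ j1 + 1) (h2 : j1 ≤ j2) :
    fo s i j2 = fo s i j1 ++
      ((List.range' (j1 + 1) (j2 - j1)).filter
        (fun p => decide (∀ q ∈ Finset.Ico i p, s q ≠ s p))).map s := by
  unfold fo
  rw [← List.map_append, ← List.filter_append]
  have hr : List.range' i (j1 + 1 - i) ++ List.range' (j1 + 1) (j2 - j1)
      = List.range' i (j2 + 1 - i) := by
    have := List.range'_append_1 (s := i) (m := j1 + 1 - i) (n := j2 - j1)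
    rw [show i + (j1 + 1 - i) = j1 + 1 by omega] at this
    rw [this, show j1 + 1 - i + (j2 - j1) = j2 + 1 - i by omega]
  rw [hr]

/-- For every maximal location `⟨i,j⟩` of `s = s_1 … s_n` (extended by a sentinel
letter `s_{n+1}` not occurring in `s_1 … s_n`), the string `O_s^{⟨i,j⟩}` is a
proper prefix of `lfo_s(Support(⟨i,j⟩))`. -/
theorem Ostr_proper_prefix_lfo {α : Type*} [DecidableEq α]
    (s : ℕ → α) (n i j : ℕ)
    (hsent : ∀ p, 1 ≤ p → p ≤ n → s p ≠ s (n + 1))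
    (h : IsMaxLoc s n i j) :
    Ostr s i j <+: lfo s n (support s i j) ∧ Ostr s i j ≠ lfo s n (support s i j) := by
  obtain ⟨hi1, hij, hjn, _, hmax⟩ := h
  set k := support s i j with hk
  obtain ⟨hik, hkj, hnolater⟩ := support_spec s hij
  have hnew : ∀ q, k ≤ q → q ≤ j → s q ≠ s (j + 1) := by
    intro q hq1 hq2
    rcases lt_or_ge j n with hlt | hge
    · intro hc
      exact hmax hlt (Finset.mem_image.2 ⟨q, Finset.mem_Icc.2 ⟨le_trans hik hq1, hq2⟩, hc⟩)
    · have hjeq : j = n := le_antisymm hjn hge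
      subst hjeq
      exact hsent q (le_trans hi1 (le_trans hik hq1)) hq2
  have hnxt : j + 2 ≤ nxt s n k := by
    have hmem : nxt s n k ∈ {p | k < p ∧ p ≤ n + 1 ∧ s p = s k} ∪ {n + 2} :=
      Nat.sInf_mem ⟨n + 2, Or.inr rfl⟩
    rcases hmem with hmem | hmem
    · obtain ⟨h1, h2, h3⟩ := hmem
      by_contra hc
      push_neg at hc
      rcases lt_or_ge j (nxt s n k) with hlt | hle
      · have heq : nxt s n k = j + 1 := by omega
        rw [heq] at h3
        exact hnew k le_rfl hkj h3.symm
      · exact hnolater _ h1 hle h3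
    · simp only [Set.mem_singleton_iff] at hmem
      omega
  set m := nxt s n k - 1 with hm
  have hjm : j + 1 ≤ m := by omega
  have happ := fo_append s (i := k) (j1 := j) (j2 := m) (by omega) (by omega)
  have hOstr : Ostr s i j = fo s k j := rfl
  have hlfo : lfo s n k = fo s k m := rfl
  have htail : j + 1 ∈ (List.range' (j + 1) (m - j)).filter
      (fun p => decide (∀ q ∈ Finset.Ico k p, s q ≠ s p)) := by
    rw [List.mem_filter]
    constructor
    · exact List.mem_range'_1.2 ⟨le_refl _, by omega⟩
    · rw [decide_eq_true_eq]
      intro q hq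
      rw [Finset.mem_Ico] at hq
      exact hnew q hq.1 (by omega)
  have htailne : ((List.range' (j + 1) (m - j)).filter
      (fun p => decide (∀ q ∈ Finset.Ico k p, s q ≠ s p))).map s ≠ [] := by
    simp only [ne_eq, List.map_eq_nil_iff]
    intro hc
    rw [hc] at htail
    exact List.not_mem_nil htail
  constructor
  · rw [hOstr, hlfo, happ]
    exact List.prefix_append _ _
  · rw [hOstr, hlfo, happ]
    intro hc
    apply htailne
    have := congrArg List.length hc
    rw [List.length_append] at this
    exact List.eq_nil_of_length_eq_zero (by omega)
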